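/- Let p be a weighted homogeneous real polynomial of weight 1 on ℂ^n with p ≥ 0 everywhere, and suppose p does not vanish identically on any orbit of the weighted dilations D_τ(z) = (τ^{δ₁}z₁,…,τ^{δ_n}z_n), τ > 0, other than {0}. If the balanced part p⁽⁰⁾ satisfies p⁽⁰⁾(z₀) = 0 for some z₀ ≠ 0, then p vanishes on the entire dilation orbit {D_τ(z₀) : τ > 0} — a contradiction; hence p⁽⁰⁾(z) > 0 for all z ≠ 0, and consequently every sublevel set {p⁽⁰⁾ ≤ c} is compact. -/
import Mathlib

open Complex

/-- The symmetrization (average over the weighted circle action, period `2πN` for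
commensurable weights `δⱼ = aⱼ/N`) of a function `p` on ℂⁿ. -/
noncomputable def symmAvg {n : ℕ} (N : ℕ) (δ : Fin n → ℝ) (p : (Fin n → ℂ) → ℝ)
    (z : Fin n → ℂ) : ℝ :=
  (1 / (2 * Real.pi * N)) *
    ∫ θ in (0:ℝ)..(2 * Real.pi * N), p (fun j => Complex.exp (I * δ j * θ) * z j)

lemma aux_integrand_cont {n : ℕ} {δ : Fin n → ℝ} {p : (Fin n → ℂ) → ℝ}
    (hp : Continuous p) :
    Continuous (Function.uncurry fun (z : Fin n → ℂ) (θ : ℝ) =>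
      p (fun j => Complex.exp (I * δ j * θ) * z j)) := by
  show Continuous fun q : (Fin n → ℂ) × ℝ => p (fun j => Complex.exp (I * δ j * q.2) * q.1 j)
  apply hp.comp
  refine continuous_pi fun j => Continuous.mul ?_ ((continuous_apply j).comp continuous_fst)
  exact Complex.continuous_exp.comp (by continuity)

lemma symmAvg_cont {n : ℕ} (N : ℕ) {δ : Fin n → ℝ} {p : (Fin n → ℂ) → ℝ}
    (hp : Continuous p) : Continuous (symmAvg N δ p) := by
  have hL : (0:ℝ) ≤ 2 * Real.pi * N := by positivity
  unfold symmAvg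
  apply Continuous.mul continuous_const
  have : ∀ z : Fin n → ℂ,
      (∫ θ in (0:ℝ)..(2 * Real.pi * N), p (fun j => Complex.exp (I * δ j * θ) * z j))
      = ∫ θ in Set.Icc (0:ℝ) (2 * Real.pi * N), p (fun j => Complex.exp (I * δ j * θ) * z j) := by
    intro z
    rw [intervalIntegral.integral_of_le hL, MeasureTheory.integral_Icc_eq_integral_Ioc]
  simp only [this]
  exact continuous_parametric_integral_of_continuous
    (f := fun (z : Fin n → ℂ) (θ : ℝ) => p (fun j => Complex.exp (I * δ j * θ) * z j))
    (aux_integrand_cont hp) isCompact_Icc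

lemma symmAvg_nonneg {n : ℕ} (N : ℕ) {δ : Fin n → ℝ} {p : (Fin n → ℂ) → ℝ}
    (hpos : ∀ z, 0 ≤ p z) (z : Fin n → ℂ) : 0 ≤ symmAvg N δ p z := by
  have hL : (0:ℝ) ≤ 2 * Real.pi * N := by positivity
  unfold symmAvg
  apply mul_nonneg (by positivity)
  exact intervalIntegral.integral_nonneg hL (fun θ _ => hpos _)

lemma symmAvg_homog {n : ℕ} (N : ℕ) {δ : Fin n → ℝ} {p : (Fin n → ℂ) → ℝ}
    (hhom : ∀ τ : ℝ, 0 < τ → ∀ z : Fin n → ℂ,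
      p (fun j => ((τ ^ δ j : ℝ) : ℂ) * z j) = τ * p z)
    {τ : ℝ} (hτ : 0 < τ) (z : Fin n → ℂ) :
    symmAvg N δ p (fun j => ((τ ^ δ j : ℝ) : ℂ) * z j) = τ * symmAvg N δ p z := by
  unfold symmAvg
  have h : ∀ θ : ℝ,
      p (fun j => Complex.exp (I * δ j * θ) * (((τ ^ δ j : ℝ) : ℂ) * z j))
      = τ * p (fun j => Complex.exp (I * δ j * θ) * z j) := by
    intro θ
    rw [← hhom τ hτ]
    congr 1
    funext j
    ring
  simp only [h]
  rw [intervalIntegral.integral_const_mul]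
  ring

lemma integral_pos_of_nonneg_of_pos_at_zero {g : ℝ → ℝ} (hg : Continuous g)
    (hnn : ∀ x, 0 ≤ g x) {L : ℝ} (hL : 0 < L) (h0 : 0 < g 0) :
    0 < ∫ x in (0:ℝ)..L, g x := by
  rw [intervalIntegral.integral_of_le hL.le]
  rw [MeasureTheory.setIntegral_pos_iff_support_of_nonneg_ae
    (Filter.Eventually.of_forall fun x => hnn x)
    (hg.intervalIntegrable 0 L).1]
  have hopen : IsOpen (Function.support g) := hg.isOpen_support
  have h0mem : (0:ℝ) ∈ Function.support g := by
    simp [Function.mem_support]; exact ne_of_gt h0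
  obtain ⟨ε, hε, hball⟩ := Metric.isOpen_iff.1 hopen 0 h0mem
  have hsub : Set.Ioo 0 (min ε L) ⊆ Function.support g ∩ Set.Ioc 0 L := by
    intro x hx
    constructor
    · apply hball
      rw [Metric.mem_ball, Real.dist_eq, sub_zero, abs_of_pos hx.1]
      exact hx.2.trans_le (min_le_left _ _)
    · exact ⟨hx.1, le_of_lt (hx.2.trans_le (min_le_right _ _))⟩
  calc (0:ENNReal) < MeasureTheory.volume (Set.Ioo 0 (min ε L)) := by
        rw [Real.volume_Ioo]; simp [lt_min_iff, hε, hL]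
    _ ≤ _ := MeasureTheory.measure_mono hsub

/-- Let `p ≥ 0` be a continuous weighted homogeneous real polynomial function of weight 1
on ℂⁿ which does not vanish identically on any weighted dilation orbit
`{D_τ(z₀) : τ > 0}` with `z₀ ≠ 0`.  Then the balanced part `p⁽⁰⁾` (the symmetrization of
`p`) is strictly positive off the origin, and every sublevel set `{p⁽⁰⁾ ≤ c}` is compact. -/
theorem stmt_16 (n : ℕ) (N : ℕ) (hN : 0 < N) (a : Fin n → ℕ) (ha : ∀ j, 0 < a j)
    (δ : Fin n → ℝ) (hδ : ∀ j, δ j = (a j : ℝ) / N)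
    (p : (Fin n → ℂ) → ℝ) (hp : Continuous p) (hpos : ∀ z, 0 ≤ p z)
    -- weighted homogeneity of weight 1:
    (hhom : ∀ τ : ℝ, 0 < τ → ∀ z : Fin n → ℂ,
      p (fun j => ((τ ^ δ j : ℝ) : ℂ) * z j) = τ * p z)
    -- p does not vanish identically on any nontrivial dilation orbit:
    (hnv : ∀ z : Fin n → ℂ, z ≠ 0 → ∃ τ : ℝ, 0 < τ ∧
      p (fun j => ((τ ^ δ j : ℝ) : ℂ) * z j) ≠ 0) :
    (∀ z : Fin n → ℂ, z ≠ 0 → 0 < symmAvg N δ p z) ∧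
    (∀ c : ℝ, IsCompact {z : Fin n → ℂ | symmAvg N δ p z ≤ c}) := by
  have hLpos : (0:ℝ) < 2 * Real.pi * N := by
    have : (0:ℝ) < N := Nat.cast_pos.2 hN
    positivity
  have hδpos : ∀ j, 0 < δ j := by
    intro j
    rw [hδ j]
    exact div_pos (Nat.cast_pos.2 (ha j)) (Nat.cast_pos.2 hN)
  -- p is positive off 0
  have hppos : ∀ z : Fin n → ℂ, z ≠ 0 → 0 < p z := by
    intro z hz
    obtain ⟨τ, hτ, hne⟩ := hnv z hz
    rw [hhom τ hτ] at hne
    have : p z ≠ 0 := fun h => hne (by rw [h, mul_zero])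
    exact lt_of_le_of_ne (hpos z) (Ne.symm this)
  have part1 : ∀ z : Fin n → ℂ, z ≠ 0 → 0 < symmAvg N δ p z := by
    intro z hz
    unfold symmAvg
    apply mul_pos (by positivity)
    apply integral_pos_of_nonneg_of_pos_at_zero
    · exact hp.comp (continuous_pi fun j => Continuous.mul
        (Complex.continuous_exp.comp (by continuity)) continuous_const)
    · exact fun x => hpos _
    · exact hLpos
    · have : (fun j => Complex.exp (I * δ j * (0:ℝ)) * z j) = z := by
        funext j; simp
      rw [this]; exact hppos z hz
  refine ⟨part1, ?_⟩
  intro c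
  rcases Nat.eq_zero_or_pos n with hn | hn
  · -- trivial case: the space is a subsingleton
    subst hn
    have : Subsingleton (Fin 0 → ℂ) := ⟨fun x y => by funext j; exact absurd j.2 (by omega)⟩
    exact (Set.subsingleton_of_subsingleton).finite.isCompact
  · have hne : Nonempty (Fin n) := ⟨⟨0, hn⟩⟩
    set q := symmAvg N δ p with hq
    have hqc : Continuous q := symmAvg_cont N hp
    -- minimum on the unit sphere
    have hsph : IsCompact (Metric.sphere (0 : Fin n → ℂ) 1) := isCompact_sphere 0 1
    have hsphne : (Metric.sphere (0 : Fin n → ℂ) 1).Nonempty := by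
      refine ⟨fun j => 1, ?_⟩
      simp only [Metric.mem_sphere, dist_zero_right]
      rw [pi_norm_const]
      simp
    obtain ⟨x₀, hx₀mem, hx₀min⟩ := hsph.exists_isMinOn hsphne hqc.continuousOn
    set m := q x₀ with hm
    have hmpos : 0 < m := by
      apply part1
      intro h
      have := mem_sphere_zero_iff_norm.1 hx₀mem
      rw [h] at this; simp at this
    set M : ℝ := Finset.univ.sup' (Finset.univ_nonempty) δ with hM
    have hMpos : 0 < M := lt_of_lt_of_le (hδpos (Classical.arbitrary _))
      (Finset.le_sup' δ (Finset.mem_univ _))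
    have hMge : ∀ j, δ j ≤ M := fun j => Finset.le_sup' δ (Finset.mem_univ j)
    set d : ℝ := Finset.univ.inf' (Finset.univ_nonempty) δ with hd
    have hdpos : 0 < d := by
      obtain ⟨j, _, hj⟩ := Finset.exists_mem_eq_inf' (Finset.univ_nonempty) δ
      rw [hd, hj]; exact hδpos j
    have hdle : ∀ j, d ≤ δ j := fun j => Finset.inf'_le δ (Finset.mem_univ j)
    set T : ℝ := max 1 (c / m + 1) with hT
    have hT1 : (1:ℝ) ≤ T := le_max_left _ _
    have hTm : c < T * m := by
      have : (c / m + 1) * m ≤ T * m :=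
        mul_le_mul_of_nonneg_right (le_max_right _ _) hmpos.le
      calc c = c / m * m := by field_simp
        _ < (c / m + 1) * m := by nlinarith
        _ ≤ T * m := this
    set R : ℝ := T ^ M with hR
    -- main claim: outside the ball of radius R, q > c
    have key : ∀ z : Fin n → ℂ, R < ‖z‖ → c < q z := by
      intro z hz
      have hR1 : (1:ℝ) ≤ R := by
        rw [hR]; calc (1:ℝ) = 1 ^ M := (Real.one_rpow M).symm
          _ ≤ T ^ M := Real.rpow_le_rpow zero_le_one hT1 hMpos.le
      have hz1 : 1 < ‖z‖ := lt_of_le_of_lt hR1 hz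
      have hznorm : 0 < ‖z‖ := by linarith
      -- the scaling function
      set F : ℝ → ℝ := fun s => ‖(fun j => ((s ^ δ j : ℝ) : ℂ) * z j : Fin n → ℂ)‖ with hF
      have hFcont : Continuous F := by
        apply Continuous.norm
        refine continuous_pi fun j => Continuous.mul ?_ continuous_const
        exact Complex.continuous_ofReal.comp (continuous_iff_continuousAt.2 fun x =>
          Real.continuousAt_rpow_const x (δ j) (Or.inr (hδpos j).le))
      have hF1 : F 1 = ‖z‖ := by
        simp only [hF, Real.one_rpow, Complex.ofReal_one, one_mul]
      set ε : ℝ := ‖z‖ ^ (-(1/d)) with hε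
      have hεpos : 0 < ε := Real.rpow_pos_of_pos hznorm _
      have hεle1 : ε ≤ 1 :=
        Real.rpow_le_one_of_one_le_of_nonpos hz1.le (neg_nonpos.2 (by positivity))
      have hFε : F ε ≤ 1 := by
        rw [hF]
        have : ∀ j, ‖((ε ^ δ j : ℝ) : ℂ) * z j‖ ≤ ε ^ d * ‖z‖ := by
          intro j
          rw [norm_mul, Complex.norm_real, Real.norm_eq_abs,
            _root_.abs_of_nonneg (Real.rpow_nonneg hεpos.le _)]
          have h1 : ε ^ δ j ≤ ε ^ d :=
            Real.rpow_le_rpow_of_exponent_ge hεpos hεle1 (hdle j)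
          have h2 : ‖z j‖ ≤ ‖z‖ := norm_le_pi_norm z j
          exact mul_le_mul h1 h2 (norm_nonneg _) (Real.rpow_nonneg hεpos.le _)
        have hεd : ε ^ d * ‖z‖ = 1 := by
          rw [hε, ← Real.rpow_mul hznorm.le]
          have : -(1 / d) * d = -1 := by field_simp
          rw [this, Real.rpow_neg_one, inv_mul_cancel₀ (ne_of_gt hznorm)]
        apply (pi_norm_le_iff_of_nonneg zero_le_one).2
        intro j
        calc ‖((ε ^ δ j : ℝ) : ℂ) * z j‖ ≤ ε ^ d * ‖z‖ := this j
          _ = 1 := hεd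
      -- intermediate value theorem
      have hmem : (1:ℝ) ∈ Set.Icc (F ε) (F 1) := ⟨hFε, by rw [hF1]; exact hz1.le⟩
      obtain ⟨s, hsmem, hFs⟩ := intermediate_value_Icc hεle1 hFcont.continuousOn hmem
      have hspos : 0 < s := hεpos.trans_le hsmem.1
      set w : Fin n → ℂ := fun j => ((s ^ δ j : ℝ) : ℂ) * z j with hw
      have hwnorm : ‖w‖ = 1 := hFs
      have hwmem : w ∈ Metric.sphere (0 : Fin n → ℂ) 1 := by
        rw [mem_sphere_zero_iff_norm]; exact hwnorm
      have hτpos : 0 < s⁻¹ := inv_pos.2 hspos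
      have hτ1 : (1:ℝ) ≤ s⁻¹ := by
        nlinarith [mul_inv_cancel₀ (ne_of_gt hspos), hsmem.2]
      have hco : ∀ j, ((s⁻¹ ^ δ j : ℝ) : ℂ) * w j = z j := by
        intro j
        rw [hw]
        rw [← mul_assoc, ← Complex.ofReal_mul,
          ← Real.mul_rpow (inv_nonneg.2 hspos.le) hspos.le,
          inv_mul_cancel₀ (ne_of_gt hspos), Real.one_rpow, Complex.ofReal_one, one_mul]
      have hqz : q z = s⁻¹ * q w := by
        conv_lhs => rw [show z = (fun j => ((s⁻¹ ^ δ j : ℝ) : ℂ) * w j) from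
          funext fun j => (hco j).symm]
        exact symmAvg_homog N hhom hτpos w
      have hqw : m ≤ q w := hx₀min hwmem
      -- bound on the norm of z in terms of s⁻¹
      have hzbound : ‖z‖ ≤ s⁻¹ ^ M := by
        apply (pi_norm_le_iff_of_nonneg (Real.rpow_nonneg hτpos.le M)).2
        intro j
        rw [← hco j, norm_mul, Complex.norm_real, Real.norm_eq_abs,
          _root_.abs_of_nonneg (Real.rpow_nonneg hτpos.le _)]
        have h1 : s⁻¹ ^ δ j ≤ s⁻¹ ^ M :=
          Real.rpow_le_rpow_of_exponent_le hτ1 (hMge j)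
        have h2 : ‖w j‖ ≤ 1 := by
          calc ‖w j‖ ≤ ‖w‖ := norm_le_pi_norm w j
            _ = 1 := hwnorm
        calc s⁻¹ ^ δ j * ‖w j‖ ≤ s⁻¹ ^ M * 1 :=
          mul_le_mul h1 h2 (norm_nonneg _) (Real.rpow_nonneg hτpos.le _)
          _ = s⁻¹ ^ M := mul_one _
      have hTτ : T < s⁻¹ := by
        by_contra hcon
        push_neg at hcon
        have : s⁻¹ ^ M ≤ T ^ M := Real.rpow_le_rpow hτpos.le hcon hMpos.le
        have : ‖z‖ ≤ R := le_trans hzbound (by rw [hR]; exact this)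
        linarith
      calc c < T * m := hTm
        _ < s⁻¹ * m := mul_lt_mul_of_pos_right hTτ hmpos
        _ ≤ s⁻¹ * q w := mul_le_mul_of_nonneg_left hqw hτpos.le
        _ = q z := hqz.symm
    have hsubset : {z : Fin n → ℂ | q z ≤ c} ⊆ Metric.closedBall 0 R := by
      intro z hzin
      rw [Metric.mem_closedBall, dist_zero_right]
      by_contra hcon
      push_neg at hcon
      exact absurd hzin (by simp only [Set.mem_setOf_eq, not_le]; exact key z hcon)
    exact IsCompact.of_isClosed_subset (isCompact_closedBall 0 R)
      (isClosed_le hqc continuous_const) hsubset
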